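/- arXiv:1006.1385 — 2 statements merged into one kernel-verified Lean document; each statement's English description precedes it below -/
import Mathlib

section
/- Let ρ > 0 and μ ∈ ℝ satisfy ρ - μ > 1, and fix v₀ > 0. Then there is a constant C such that for all v ≥ v₀, ∫_{-∞}^{∞} (1+|t|)^{μ} (1+ v|t|)^{-ρ} dt ≤ C·E(v), where E(v) := v^{-ρ} if 0 < ρ < 1, E(v) := (1 + |log v|)/v if ρ = 1, and E(v) := 1/v if ρ > 1. -/
open MeasureTheory

open Set

/-- The high-velocity error function `E(v)` of (3.11b). -/
noncomputable def ABerror (ρ v : ℝ) : ℝ :=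
  if ρ < 1 then v ^ (-ρ) else if ρ = 1 then (1 + |Real.log v|) / v else 1 / v

lemma aberr_pos {ρ v : ℝ} (hv : 0 < v) : 0 < ABerror ρ v := by
  unfold ABerror
  split_ifs
  · positivity
  · have : 0 ≤ |Real.log v| := abs_nonneg _
    positivity
  · positivity

lemma rpow_neg_le_aberr (ρ v₀ : ℝ) (hv₀ : 0 < v₀) :
    ∃ D : ℝ, 0 ≤ D ∧ ∀ v, v₀ ≤ v → v ^ (-ρ) ≤ D * ABerror ρ v := by
  rcases lt_trichotomy ρ 1 with h | h | h
  · exact ⟨1, zero_le_one, fun v hv => by simp [ABerror, h]⟩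
  · subst h
    refine ⟨1, zero_le_one, fun v hv => ?_⟩
    have hv' : 0 < v := hv₀.trans_le hv
    have : ABerror 1 v = (1 + |Real.log v|) / v := by simp [ABerror]
    rw [this, one_mul, Real.rpow_neg_one, ← one_div]
    gcongr
    · exact le_add_of_nonneg_right (abs_nonneg _)
  · refine ⟨v₀ ^ (1 - ρ), Real.rpow_nonneg hv₀.le _, fun v hv => ?_⟩
    have hv' : 0 < v := hv₀.trans_le hv
    have hE : ABerror ρ v = 1 / v := by
      simp [ABerror, not_lt.mpr h.le, h.ne']
    rw [hE]
    have h1 : v ^ (-ρ) = v ^ (1 - ρ) * (1 / v) := by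
      rw [one_div, ← Real.rpow_neg_one v, ← Real.rpow_add hv']
      ring_nf
    rw [h1]
    have h2 : v ^ (1 - ρ) ≤ v₀ ^ (1 - ρ) :=
      Real.rpow_le_rpow_of_nonpos hv₀ hv (by linarith)
    exact mul_le_mul_of_nonneg_right h2 (by positivity)

lemma cont_on (μ ρ v : ℝ) (hv : 0 < v) :
    ContinuousOn (fun t : ℝ => (1 + t) ^ μ * (1 + v * t) ^ (-ρ)) (Ici 0) := by
  have c1 : ContinuousOn (fun t : ℝ => (1 + t) ^ μ) (Ici (0:ℝ)) := by
    apply ContinuousOn.rpow_const (by fun_prop)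
    intro t ht
    exact Or.inl (by simp only [mem_Ici] at ht; positivity)
  have c2 : ContinuousOn (fun t : ℝ => (1 + v * t) ^ (-ρ)) (Ici (0:ℝ)) := by
    apply ContinuousOn.rpow_const (by fun_prop)
    intro t ht
    simp only [mem_Ici] at ht
    exact Or.inl (by positivity)
  exact c1.mul c2

lemma pieceB (ρ μ v₀ : ℝ) (hρ : 0 < ρ) (hρμ : 1 < ρ - μ) (hv₀ : 0 < v₀) :
    ∃ C : ℝ, ∀ v, v₀ ≤ v →
      IntegrableOn (fun t : ℝ => (1 + t) ^ μ * (1 + v * t) ^ (-ρ)) (Ioi (1:ℝ)) ∧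
      (∫ t in Ioi (1:ℝ), (1 + t) ^ μ * (1 + v * t) ^ (-ρ)) ≤ C * ABerror ρ v := by
  obtain ⟨D, hD0, hD⟩ := rpow_neg_le_aberr ρ v₀ hv₀
  set Cμ : ℝ := max 1 ((2:ℝ) ^ μ) with hCμdef
  have hCμ1 : (1:ℝ) ≤ Cμ := le_max_left _ _
  have hCμ0 : (0:ℝ) ≤ Cμ := by linarith
  refine ⟨Cμ * (ρ - μ - 1)⁻¹ * D, fun v hv => ?_⟩
  have hv' : 0 < v := hv₀.trans_le hv
  set f : ℝ → ℝ := fun t => (1 + t) ^ μ * (1 + v * t) ^ (-ρ) with hf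
  set g : ℝ → ℝ := fun t => Cμ * v ^ (-ρ) * t ^ (μ - ρ) with hg
  have hbound : ∀ t ∈ Ioi (1:ℝ), f t ≤ g t := by
    intro t ht
    simp only [mem_Ioi] at ht
    have ht0 : (0:ℝ) < t := by linarith
    have h1 : (1 + t) ^ μ ≤ Cμ * t ^ μ := by
      rcases le_or_gt 0 μ with hμ | hμ
      · calc (1 + t) ^ μ ≤ (2 * t) ^ μ :=
              Real.rpow_le_rpow (by linarith) (by linarith) hμ
          _ = (2:ℝ) ^ μ * t ^ μ := Real.mul_rpow (by norm_num) ht0.le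
          _ ≤ Cμ * t ^ μ :=
              mul_le_mul_of_nonneg_right (le_max_right _ _) (Real.rpow_nonneg ht0.le _)
      · calc (1 + t) ^ μ ≤ t ^ μ :=
              Real.rpow_le_rpow_of_nonpos ht0 (by linarith) hμ.le
          _ ≤ Cμ * t ^ μ := by
              nlinarith [Real.rpow_nonneg ht0.le μ]
    have h2 : (1 + v * t) ^ (-ρ) ≤ v ^ (-ρ) * t ^ (-ρ) := by
      have hvt : 0 < v * t := by positivity
      calc (1 + v * t) ^ (-ρ) ≤ (v * t) ^ (-ρ) :=
            Real.rpow_le_rpow_of_nonpos hvt (by linarith) (by linarith)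
        _ = v ^ (-ρ) * t ^ (-ρ) := Real.mul_rpow hv'.le ht0.le
    calc f t ≤ (Cμ * t ^ μ) * (v ^ (-ρ) * t ^ (-ρ)) := by
          apply mul_le_mul h1 h2 (Real.rpow_nonneg (by positivity) _)
          positivity
      _ = g t := by
          show _ = Cμ * v ^ (-ρ) * t ^ (μ - ρ)
          have h3 : t ^ (μ - ρ) = t ^ μ * t ^ (-ρ) := by
            rw [← Real.rpow_add ht0]; ring_nf
          rw [h3]; ring
  have hg_int : IntegrableOn g (Ioi (1:ℝ)) :=
    (integrableOn_Ioi_rpow_of_lt (by linarith) one_pos).const_mul _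
  have hf_meas : AEStronglyMeasurable f ((volume : Measure ℝ).restrict (Ioi 1)) := by
    apply ContinuousOn.aestronglyMeasurable _ measurableSet_Ioi
    exact (cont_on μ ρ v hv').mono (fun t ht => mem_Ici.mpr (le_of_lt (lt_trans one_pos ht)))
  have hf_int : IntegrableOn f (Ioi (1:ℝ)) := by
    apply hg_int.mono' hf_meas
    filter_upwards [ae_restrict_mem measurableSet_Ioi] with t ht
    have ht0 : (0:ℝ) < t := lt_trans one_pos ht
    have hfpos : 0 ≤ f t := by
      apply mul_nonneg (Real.rpow_nonneg (by linarith) _)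
        (Real.rpow_nonneg (by positivity) _)
    rw [Real.norm_eq_abs, abs_of_nonneg hfpos]
    exact hbound t ht
  refine ⟨hf_int, ?_⟩
  have hmono : (∫ t in Ioi (1:ℝ), f t) ≤ ∫ t in Ioi (1:ℝ), g t :=
    setIntegral_mono_on hf_int hg_int measurableSet_Ioi hbound
  have hgval : (∫ t in Ioi (1:ℝ), g t) = Cμ * v ^ (-ρ) * (ρ - μ - 1)⁻¹ := by
    simp only [hg]
    rw [MeasureTheory.integral_const_mul, integral_Ioi_rpow_of_lt (by linarith) one_pos]
    rw [Real.one_rpow]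
    have hne : μ - ρ + 1 ≠ 0 := by intro h; nlinarith
    have hne2 : ρ - μ - 1 ≠ 0 := by intro h; nlinarith
    field_simp
    ring
  refine hmono.trans ?_
  rw [hgval]
  have hvD := hD v hv
  have hinv : (0:ℝ) ≤ (ρ - μ - 1)⁻¹ := by
    apply inv_nonneg.mpr; linarith
  calc Cμ * v ^ (-ρ) * (ρ - μ - 1)⁻¹ ≤ Cμ * (D * ABerror ρ v) * (ρ - μ - 1)⁻¹ := by
        apply mul_le_mul_of_nonneg_right _ hinv
        exact mul_le_mul_of_nonneg_left hvD hCμ0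
    _ = Cμ * (ρ - μ - 1)⁻¹ * D * ABerror ρ v := by ring

lemma pieceA (ρ μ v₀ : ℝ) (hρ : 0 < ρ) (hv₀ : 0 < v₀) :
    ∃ C : ℝ, ∀ v, v₀ ≤ v →
      IntegrableOn (fun t : ℝ => (1 + t) ^ μ * (1 + v * t) ^ (-ρ)) (Ioc (0:ℝ) 1) ∧
      (∫ t in Ioc (0:ℝ) 1, (1 + t) ^ μ * (1 + v * t) ^ (-ρ)) ≤ C * ABerror ρ v := by
  set Cμ : ℝ := max 1 ((2:ℝ) ^ μ) with hCμdef
  have hCμ1 : (1:ℝ) ≤ Cμ := le_max_left _ _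
  have hCμ0 : (0:ℝ) ≤ Cμ := by linarith
  -- the inner constant depending on the case of ρ
  obtain ⟨K, hK0, hK⟩ :
      ∃ K : ℝ, 0 ≤ K ∧ ∀ v, v₀ ≤ v →
        (∫ t in Ioc (0:ℝ) 1, (1 + v * t) ^ (-ρ)) ≤ K * ABerror ρ v := by
    rcases lt_trichotomy ρ 1 with h | h | h
    · -- ρ < 1 : compare with v^(-ρ) t^(-ρ)
      refine ⟨(1 - ρ)⁻¹, inv_nonneg.mpr (by linarith), fun v hv => ?_⟩
      have hv' : 0 < v := hv₀.trans_le hv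
      have hE : ABerror ρ v = v ^ (-ρ) := by simp [ABerror, h]
      have hlhs_cont : ContinuousOn (fun t : ℝ => (1 + v * t) ^ (-ρ)) (Icc 0 1) := by
        apply ContinuousOn.rpow_const (by fun_prop)
        intro t ht
        have := ht.1
        exact Or.inl (by positivity)
      have hlhs_int : IntegrableOn (fun t : ℝ => (1 + v * t) ^ (-ρ)) (Ioc (0:ℝ) 1) :=
        (hlhs_cont.integrableOn_Icc).mono_set Ioc_subset_Icc_self
      have hrhs_int : IntegrableOn (fun t : ℝ => v ^ (-ρ) * t ^ (-ρ)) (Ioc (0:ℝ) 1) := by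
        exact ((intervalIntegrable_iff_integrableOn_Ioc_of_le zero_le_one).mp
          (intervalIntegral.intervalIntegrable_rpow' (by linarith))).const_mul _
      have hmono : (∫ t in Ioc (0:ℝ) 1, (1 + v * t) ^ (-ρ)) ≤
          ∫ t in Ioc (0:ℝ) 1, v ^ (-ρ) * t ^ (-ρ) := by
        apply setIntegral_mono_on hlhs_int hrhs_int measurableSet_Ioc
        intro t ht
        have ht0 : 0 < t := ht.1
        have hvt : 0 < v * t := by positivity
        calc (1 + v * t) ^ (-ρ) ≤ (v * t) ^ (-ρ) :=
              Real.rpow_le_rpow_of_nonpos hvt (by linarith) (by linarith)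
          _ = v ^ (-ρ) * t ^ (-ρ) := Real.mul_rpow hv'.le ht0.le
      refine hmono.trans ?_
      rw [MeasureTheory.integral_const_mul, ← intervalIntegral.integral_of_le zero_le_one,
        integral_rpow (Or.inl (by linarith)), hE]
      rw [Real.one_rpow, Real.zero_rpow (by intro hc; nlinarith)]
      have h1ρ : (0:ℝ) < 1 - ρ := by linarith
      rw [show -ρ + 1 = 1 - ρ by ring]
      rw [div_eq_mul_inv]
      have := Real.rpow_nonneg hv'.le (-ρ)
      nlinarith
    · -- ρ = 1 : logarithmic integral
      subst h
      refine ⟨max (Real.log (1 + 1 / v₀)) 1, by positivity, fun v hv => ?_⟩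
      set K := max (Real.log (1 + 1 / v₀)) 1 with hKdef
      have hK1 : (1:ℝ) ≤ K := le_max_right _ _
      have hv' : 0 < v := hv₀.trans_le hv
      have hE : ABerror 1 v = (1 + |Real.log v|) / v := by simp [ABerror]
      have key : ∀ t ∈ uIcc (0:ℝ) 1,
          HasDerivAt (fun s => v⁻¹ * Real.log (1 + v * s)) ((1 + v * t) ^ (-(1:ℝ))) t := by
        intro t ht
        rw [uIcc_of_le zero_le_one] at ht
        have ht0 : (0:ℝ) ≤ t := ht.1
        have h0 : 0 < 1 + v * t := by positivity
        have hinner : HasDerivAt (fun s : ℝ => 1 + v * s) v t := by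
          simpa using ((hasDerivAt_id t).const_mul v).const_add 1
        have hlog := (Real.hasDerivAt_log h0.ne').comp t hinner
        have h2 := hlog.const_mul v⁻¹
        convert h2 using 1 <;> try rfl
        rw [Real.rpow_neg_one]
        field_simp
      have hcont' : ContinuousOn (fun t : ℝ => (1 + v * t) ^ (-(1:ℝ))) (Icc 0 1) := by
        apply ContinuousOn.rpow_const (by fun_prop)
        intro t ht
        have := ht.1
        exact Or.inl (by positivity)
      have hII : IntervalIntegrable (fun t : ℝ => (1 + v * t) ^ (-(1:ℝ))) volume 0 1 := by
        rw [intervalIntegrable_iff_integrableOn_Ioc_of_le zero_le_one]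
        exact (hcont'.integrableOn_Icc).mono_set Ioc_subset_Icc_self
      have hFTC := intervalIntegral.integral_eq_sub_of_hasDerivAt key hII
      rw [← intervalIntegral.integral_of_le zero_le_one, hFTC]
      simp only [mul_one, mul_zero, add_zero, Real.log_one, sub_zero]
      rw [hE]
      have hlogb : Real.log (1 + v) ≤ Real.log (1 + 1 / v₀) + |Real.log v| := by
        have hle : 1 + v ≤ (1 + 1 / v₀) * v := by
          have h1 : (1:ℝ) ≤ v / v₀ := (one_le_div hv₀).mpr hv
          have h2 : (1 + 1 / v₀) * v = v + v / v₀ := by field_simp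
          linarith
        calc Real.log (1 + v) ≤ Real.log ((1 + 1 / v₀) * v) :=
              Real.log_le_log (by positivity) hle
          _ = Real.log (1 + 1 / v₀) + Real.log v :=
              Real.log_mul (by positivity) hv'.ne'
          _ ≤ Real.log (1 + 1 / v₀) + |Real.log v| := by
              have := le_abs_self (Real.log v); linarith
      have hKb : Real.log (1 + v) ≤ K * (1 + |Real.log v|) := by
        have h1 : Real.log (1 + 1 / v₀) ≤ K := le_max_left _ _
        have h2 : |Real.log v| ≤ K * |Real.log v| := by
          nlinarith [abs_nonneg (Real.log v)]
        nlinarith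
      calc v⁻¹ * Real.log (1 + v) ≤ v⁻¹ * (K * (1 + |Real.log v|)) :=
            mul_le_mul_of_nonneg_left hKb (by positivity)
        _ = K * ((1 + |Real.log v|) / v) := by rw [div_eq_mul_inv]; ring
    · -- ρ > 1
      refine ⟨(ρ - 1)⁻¹, inv_nonneg.mpr (by linarith), fun v hv => ?_⟩
      have hv' : 0 < v := hv₀.trans_le hv
      have hE : ABerror ρ v = 1 / v := by simp [ABerror, not_lt.mpr h.le, h.ne']
      have hρ1 : (1:ℝ) - ρ ≠ 0 := by intro hc; nlinarith
      have key : ∀ t ∈ uIcc (0:ℝ) 1,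
          HasDerivAt (fun s => ((1 - ρ) * v)⁻¹ * (1 + v * s) ^ (1 - ρ))
            ((1 + v * t) ^ (-ρ)) t := by
        intro t ht
        rw [uIcc_of_le zero_le_one] at ht
        have ht0 : (0:ℝ) ≤ t := ht.1
        have h0 : 0 < 1 + v * t := by positivity
        have hinner : HasDerivAt (fun s : ℝ => 1 + v * s) v t := by
          simpa using ((hasDerivAt_id t).const_mul v).const_add 1
        have hrp := (Real.hasDerivAt_rpow_const (p := 1 - ρ) (Or.inl h0.ne')).comp t hinner
        have h2 := hrp.const_mul ((1 - ρ) * v)⁻¹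
        convert h2 using 1 <;> try rfl
        rw [show (1:ℝ) - ρ - 1 = -ρ by ring]
        field_simp
      have hcont' : ContinuousOn (fun t : ℝ => (1 + v * t) ^ (-ρ)) (Icc 0 1) := by
        apply ContinuousOn.rpow_const (by fun_prop)
        intro t ht
        have := ht.1
        exact Or.inl (by positivity)
      have hII : IntervalIntegrable (fun t : ℝ => (1 + v * t) ^ (-ρ)) volume 0 1 := by
        rw [intervalIntegrable_iff_integrableOn_Ioc_of_le zero_le_one]
        exact (hcont'.integrableOn_Icc).mono_set Ioc_subset_Icc_self
      have hFTC := intervalIntegral.integral_eq_sub_of_hasDerivAt key hII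
      rw [← intervalIntegral.integral_of_le zero_le_one, hFTC, hE]
      simp only [mul_one, mul_zero, add_zero, Real.one_rpow]
      set a := (1 + v) ^ (1 - ρ) with hadef
      have ha0 : 0 ≤ a := Real.rpow_nonneg (by positivity) _
      have hinv : ((1 - ρ) * v)⁻¹ = -(((ρ - 1) * v)⁻¹) := by
        rw [show (1 - ρ) * v = -((ρ - 1) * v) by ring, inv_neg]
      rw [hinv]
      have hc : 0 < ((ρ - 1) * v)⁻¹ := inv_pos.mpr (mul_pos (by linarith) hv')
      have hfin : (ρ - 1)⁻¹ * (1 / v) = ((ρ - 1) * v)⁻¹ := by rw [mul_inv, one_div]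
      rw [hfin]
      nlinarith [mul_nonneg hc.le ha0]
  refine ⟨Cμ * K, fun v hv => ?_⟩
  have hv' : 0 < v := hv₀.trans_le hv
  set f : ℝ → ℝ := fun t => (1 + t) ^ μ * (1 + v * t) ^ (-ρ) with hf
  set g : ℝ → ℝ := fun t => Cμ * (1 + v * t) ^ (-ρ) with hg
  have hf_int : IntegrableOn f (Ioc (0:ℝ) 1) :=
    (((cont_on μ ρ v hv').mono Icc_subset_Ici_self).integrableOn_Icc).mono_set
      Ioc_subset_Icc_self
  have hg_cont : ContinuousOn (fun t : ℝ => (1 + v * t) ^ (-ρ)) (Ici 0) := by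
    apply ContinuousOn.rpow_const (by fun_prop)
    intro t ht
    simp only [mem_Ici] at ht
    exact Or.inl (by positivity)
  have hg_int : IntegrableOn g (Ioc (0:ℝ) 1) :=
    ((((hg_cont.mono Icc_subset_Ici_self).integrableOn_Icc).mono_set
      Ioc_subset_Icc_self).const_mul _)
  have hbound : ∀ t ∈ Ioc (0:ℝ) 1, f t ≤ g t := by
    intro t ht
    obtain ⟨ht0, ht1⟩ := ht
    have h1 : (1 + t) ^ μ ≤ Cμ := by
      rcases le_or_gt 0 μ with hμ | hμ
      · calc (1 + t) ^ μ ≤ (2:ℝ) ^ μ :=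
              Real.rpow_le_rpow (by linarith) (by linarith) hμ
          _ ≤ Cμ := le_max_right _ _
      · calc (1 + t) ^ μ ≤ (1:ℝ) ^ μ :=
              Real.rpow_le_rpow_of_nonpos one_pos (by linarith) hμ.le
          _ ≤ Cμ := by rw [Real.one_rpow]; exact hCμ1
    exact mul_le_mul_of_nonneg_right h1 (Real.rpow_nonneg (by positivity) _)
  refine ⟨hf_int, ?_⟩
  calc (∫ t in Ioc (0:ℝ) 1, f t) ≤ ∫ t in Ioc (0:ℝ) 1, g t :=
        setIntegral_mono_on hf_int hg_int measurableSet_Ioc hbound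
    _ = Cμ * ∫ t in Ioc (0:ℝ) 1, (1 + v * t) ^ (-ρ) := by
        simp only [hg]; rw [MeasureTheory.integral_const_mul]
    _ ≤ Cμ * (K * ABerror ρ v) := mul_le_mul_of_nonneg_left (hK v hv) hCμ0
    _ = Cμ * K * ABerror ρ v := by ring

lemma halfline (ρ μ v₀ : ℝ) (hρ : 0 < ρ) (hρμ : 1 < ρ - μ) (hv₀ : 0 < v₀) :
    ∃ C : ℝ, ∀ v, v₀ ≤ v →
      (∫ t in Ioi (0:ℝ), (1 + t) ^ μ * (1 + v * t) ^ (-ρ)) ≤ C * ABerror ρ v := by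
  obtain ⟨CA, hCA⟩ := pieceA ρ μ v₀ hρ hv₀
  obtain ⟨CB, hCB⟩ := pieceB ρ μ v₀ hρ hρμ hv₀
  refine ⟨CA + CB, fun v hv => ?_⟩
  obtain ⟨hAint, hAle⟩ := hCA v hv
  obtain ⟨hBint, hBle⟩ := hCB v hv
  have hsplit : (∫ t in Ioi (0:ℝ), (1 + t) ^ μ * (1 + v * t) ^ (-ρ)) =
      (∫ t in Ioc (0:ℝ) 1, (1 + t) ^ μ * (1 + v * t) ^ (-ρ)) +
      (∫ t in Ioi (1:ℝ), (1 + t) ^ μ * (1 + v * t) ^ (-ρ)) := by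
    rw [← Ioc_union_Ioi_eq_Ioi (zero_le_one (α := ℝ)),
      setIntegral_union (Ioc_disjoint_Ioi le_rfl) measurableSet_Ioi hAint hBint]
  rw [hsplit, add_mul]
  exact add_le_add hAle hBle

/-- the time-decay integral bound (2.25): for `ρ > 0`, `ρ - μ > 1` and `v₀ > 0`
there is `C` with `∫_{-∞}^{∞} (1+|t|)^μ (1+v|t|)^{-ρ} dt ≤ C · E(v)` for all `v ≥ v₀`. -/
theorem time_decay_integral_bound (ρ μ v₀ : ℝ) (hρ : 0 < ρ) (hρμ : 1 < ρ - μ)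
    (hv₀ : 0 < v₀) :
    ∃ C : ℝ, ∀ v : ℝ, v₀ ≤ v →
      (∫ t : ℝ, (1 + |t|) ^ μ * (1 + v * |t|) ^ (-ρ)) ≤ C * ABerror ρ v := by
  obtain ⟨C, hC⟩ := halfline ρ μ v₀ hρ hρμ hv₀
  refine ⟨2 * C, fun v hv => ?_⟩
  have habs := integral_comp_abs
    (f := fun s : ℝ => (1 + s) ^ μ * (1 + v * s) ^ (-ρ))
  calc (∫ t : ℝ, (1 + |t|) ^ μ * (1 + v * |t|) ^ (-ρ))
      = 2 * ∫ t in Ioi (0:ℝ), (1 + t) ^ μ * (1 + v * t) ^ (-ρ) := habs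
    _ ≤ 2 * (C * ABerror ρ v) := by
        have := hC v hv
        linarith
    _ = 2 * C * ABerror ρ v := by ring
end

section
/- Let a : ℝⁿ → ℝ be bounded measurable, φ ∈ L²(ℝⁿ), v ∈ ℝⁿ \ {0}, τ ∈ ℝ, and suppose a(x + (v/|v|)τ) φ(x) = 0 for almost every x (i.e. the translated support of a is disjoint from the support of φ). Then, with H₀ := -(1/(2m))Δ and v := |v|, one has ‖a(x) e^{-i (τ/v) H₀} e^{i m v·x} φ‖ = ‖a(x + (v/|v|)τ)(e^{-i H₀ τ/v} - I)φ‖ ≤ ‖a‖_∞ ‖(e^{-i H₀ τ/v} - I)φ‖. -/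
open MeasureTheory

/-- The Fourier transform on `ℝⁿ` with the symmetric normalization. -/
noncomputable def ft (n : ℕ) (φ : EuclideanSpace ℝ (Fin n) → ℂ)
    (ξ : EuclideanSpace ℝ (Fin n)) : ℂ :=
  (((2 * Real.pi) ^ (-(n : ℝ) / 2) : ℝ) : ℂ) *
    ∫ x : EuclideanSpace ℝ (Fin n), Complex.exp (-Complex.I * ((inner ℝ x ξ : ℝ) : ℂ)) * φ x

/-- The inverse Fourier transform with the same normalization. -/
noncomputable def ftInv (n : ℕ) (ψ : EuclideanSpace ℝ (Fin n) → ℂ)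
    (x : EuclideanSpace ℝ (Fin n)) : ℂ :=
  (((2 * Real.pi) ^ (-(n : ℝ) / 2) : ℝ) : ℂ) *
    ∫ ξ : EuclideanSpace ℝ (Fin n), Complex.exp (Complex.I * ((inner ℝ x ξ : ℝ) : ℂ)) * ψ ξ

/-- The free propagator `e^{-i t H₀}`, `H₀ = -(1/(2m))Δ`, as the Fourier multiplier with
symbol `e^{-i t |ξ|²/(2m)}`. -/
noncomputable def freeProp (n : ℕ) (m t : ℝ) (φ : EuclideanSpace ℝ (Fin n) → ℂ) :
    EuclideanSpace ℝ (Fin n) → ℂ :=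
  ftInv n (fun ξ => Complex.exp (-Complex.I * ((t * ‖ξ‖ ^ 2 / (2 * m) : ℝ) : ℂ)) * ft n φ ξ)

private lemma eLpNorm_comp_add_right' {n : ℕ} (f : EuclideanSpace ℝ (Fin n) → ℂ)
    (s : EuclideanSpace ℝ (Fin n)) :
    eLpNorm (fun x => f (x + s)) 2 volume = eLpNorm f 2 volume := by
  rw [eLpNorm_eq_lintegral_rpow_enorm_toReal two_ne_zero ENNReal.ofNat_ne_top,
      eLpNorm_eq_lintegral_rpow_enorm_toReal two_ne_zero ENNReal.ofNat_ne_top]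
  congr 1
  exact lintegral_add_right_eq_self
    (fun x => ‖f x‖ₑ ^ (2 : ENNReal).toReal) s

private lemma ft_mul_exp {n : ℕ} (m : ℝ) (vv : EuclideanSpace ℝ (Fin n))
    (φ : EuclideanSpace ℝ (Fin n) → ℂ) (ξ : EuclideanSpace ℝ (Fin n)) :
    ft n (fun y => Complex.exp (Complex.I * m * ((inner ℝ vv y : ℝ) : ℂ)) * φ y) ξ
      = ft n φ (ξ - m • vv) := by
  unfold ft
  congr 1
  apply integral_congr_ae
  filter_upwards with x
  rw [inner_sub_right, real_inner_smul_right, ← mul_assoc, ← Complex.exp_add]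
  congr 2
  push_cast
  rw [real_inner_comm x vv]
  ring

private lemma freeProp_boost {n : ℕ} (m : ℝ) (hm : m ≠ 0) (t : ℝ)
    (vv : EuclideanSpace ℝ (Fin n)) (φ : EuclideanSpace ℝ (Fin n) → ℂ)
    (x : EuclideanSpace ℝ (Fin n)) :
    freeProp n m t (fun y => Complex.exp (Complex.I * m * ((inner ℝ vv y : ℝ) : ℂ)) * φ y) x
      = Complex.exp (((m * (inner ℝ vv x : ℝ) - t * m * ‖vv‖ ^ 2 / 2 : ℝ) : ℂ) * Complex.I)
          * freeProp n m t φ (x - t • vv) := by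
  have hnorm : ∀ ξ : EuclideanSpace ℝ (Fin n),
      ‖ξ + m • vv‖ ^ 2 = ‖ξ‖ ^ 2 + 2 * (m * (inner ℝ ξ vv : ℝ)) + m ^ 2 * ‖vv‖ ^ 2 := by
    intro ξ
    rw [@norm_add_sq_real, real_inner_smul_right, norm_smul, mul_pow]
    simp [Real.norm_eq_abs, sq_abs]
  have key : ∀ ξ : EuclideanSpace ℝ (Fin n),
      Complex.exp (Complex.I * ((inner ℝ x (ξ + m • vv) : ℝ) : ℂ)) *
          (Complex.exp (-Complex.I * ((t * ‖ξ + m • vv‖ ^ 2 / (2 * m) : ℝ) : ℂ)) *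
            ft n φ (ξ + m • vv - m • vv))
        = Complex.exp (((m * (inner ℝ vv x : ℝ) - t * m * ‖vv‖ ^ 2 / 2 : ℝ) : ℂ) * Complex.I) *
            (Complex.exp (Complex.I * ((inner ℝ (x - t • vv) ξ : ℝ) : ℂ)) *
              (Complex.exp (-Complex.I * ((t * ‖ξ‖ ^ 2 / (2 * m) : ℝ) : ℂ)) * ft n φ ξ)) := by
    intro ξ
    rw [add_sub_cancel_right, hnorm ξ, inner_add_right, real_inner_smul_right,
      inner_sub_left, real_inner_smul_left]
    simp only [← mul_assoc, ← Complex.exp_add]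
    congr 2
    have hm' : (m : ℂ) ≠ 0 := by exact_mod_cast hm
    push_cast
    rw [real_inner_comm ξ vv, real_inner_comm vv x]
    field_simp
    ring
  unfold freeProp ftInv
  simp_rw [ft_mul_exp (n := n) m vv φ]
  calc (((2 * Real.pi) ^ (-(n : ℝ) / 2) : ℝ) : ℂ) *
        ∫ ξ : EuclideanSpace ℝ (Fin n), Complex.exp (Complex.I * ((inner ℝ x ξ : ℝ) : ℂ)) *
          (Complex.exp (-Complex.I * ((t * ‖ξ‖ ^ 2 / (2 * m) : ℝ) : ℂ)) * ft n φ (ξ - m • vv))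
      = (((2 * Real.pi) ^ (-(n : ℝ) / 2) : ℝ) : ℂ) *
        ∫ ξ : EuclideanSpace ℝ (Fin n),
          Complex.exp (Complex.I * ((inner ℝ x (ξ + m • vv) : ℝ) : ℂ)) *
          (Complex.exp (-Complex.I * ((t * ‖ξ + m • vv‖ ^ 2 / (2 * m) : ℝ) : ℂ)) *
            ft n φ (ξ + m • vv - m • vv)) := by
        rw [integral_add_right_eq_self (μ := volume)
          (fun ξ => Complex.exp (Complex.I * ((inner ℝ x ξ : ℝ) : ℂ)) *
            (Complex.exp (-Complex.I * ((t * ‖ξ‖ ^ 2 / (2 * m) : ℝ) : ℂ)) * ft n φ (ξ - m • vv)))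
          ((m : ℝ) • vv)]
    _ = (((2 * Real.pi) ^ (-(n : ℝ) / 2) : ℝ) : ℂ) *
        ∫ ξ : EuclideanSpace ℝ (Fin n),
          Complex.exp (((m * (inner ℝ vv x : ℝ) - t * m * ‖vv‖ ^ 2 / 2 : ℝ) : ℂ) * Complex.I) *
            (Complex.exp (Complex.I * ((inner ℝ (x - t • vv) ξ : ℝ) : ℂ)) *
              (Complex.exp (-Complex.I * ((t * ‖ξ‖ ^ 2 / (2 * m) : ℝ) : ℂ)) * ft n φ ξ)) := by
        congr 1
        exact integral_congr_ae (Filter.Eventually.of_forall key)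
    _ = Complex.exp (((m * (inner ℝ vv x : ℝ) - t * m * ‖vv‖ ^ 2 / 2 : ℝ) : ℂ) * Complex.I) *
        ((((2 * Real.pi) ^ (-(n : ℝ) / 2) : ℝ) : ℂ) *
          ∫ ξ : EuclideanSpace ℝ (Fin n),
            Complex.exp (Complex.I * ((inner ℝ (x - t • vv) ξ : ℝ) : ℂ)) *
              (Complex.exp (-Complex.I * ((t * ‖ξ‖ ^ 2 / (2 * m) : ℝ) : ℂ)) * ft n φ ξ)) := by
        rw [integral_const_mul]
        ring

/-- if the translated support of `a` is disjoint from the support of `φ`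
(`a(x + v̂ τ) φ(x) = 0` a.e.), then
`‖a(x) e^{-i(τ/v)H₀} e^{i m v·x} φ‖ = ‖a(x + v̂ τ)(e^{-i H₀ τ/v} - I)φ‖
  ≤ ‖a‖_∞ ‖(e^{-i H₀ τ/v} - I)φ‖`, where `v̂ = v/|v|`, `v = |v|`. -/
theorem localization_free_evolution_bound {n : ℕ} (m : ℝ) (hm : 0 < m)
    (a : EuclideanSpace ℝ (Fin n) → ℝ) (ha_meas : Measurable a)
    (A : ℝ) (ha_bdd : ∀ x, |a x| ≤ A)
    (vv : EuclideanSpace ℝ (Fin n)) (hvv : vv ≠ 0) (τ : ℝ)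
    (φ : EuclideanSpace ℝ (Fin n) → ℂ)
    (hφ : MemLp φ 2 (volume : Measure (EuclideanSpace ℝ (Fin n))))
    (hsupp : ∀ᵐ x : EuclideanSpace ℝ (Fin n) ∂(volume : Measure (EuclideanSpace ℝ (Fin n))),
      (a (x + τ • (‖vv‖⁻¹ • vv)) : ℂ) * φ x = 0) :
    eLpNorm (fun x => (a x : ℂ) *
        freeProp n m (τ / ‖vv‖)
          (fun y => Complex.exp (Complex.I * m * ((inner ℝ vv y : ℝ) : ℂ)) * φ y) x) 2
        (volume : Measure (EuclideanSpace ℝ (Fin n)))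
      = eLpNorm (fun x => (a (x + τ • (‖vv‖⁻¹ • vv)) : ℂ) *
          (freeProp n m (τ / ‖vv‖) φ x - φ x)) 2
          (volume : Measure (EuclideanSpace ℝ (Fin n))) ∧
    eLpNorm (fun x => (a (x + τ • (‖vv‖⁻¹ • vv)) : ℂ) *
          (freeProp n m (τ / ‖vv‖) φ x - φ x)) 2
          (volume : Measure (EuclideanSpace ℝ (Fin n)))
      ≤ ENNReal.ofReal A *
        eLpNorm (fun x => freeProp n m (τ / ‖vv‖) φ x - φ x) 2
          (volume : Measure (EuclideanSpace ℝ (Fin n))) := by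
  have hA : 0 ≤ A := le_trans (abs_nonneg _) (ha_bdd 0)
  set t : ℝ := τ / ‖vv‖ with ht
  have hs : τ • (‖vv‖⁻¹ • vv) = t • vv := by
    rw [smul_smul, ht, div_eq_mul_inv]
  constructor
  · calc
      eLpNorm (fun x => (a x : ℂ) *
          freeProp n m t (fun y => Complex.exp (Complex.I * m * ((inner ℝ vv y : ℝ) : ℂ)) * φ y) x)
          2 volume
        = eLpNorm (fun x => (a x : ℂ) * freeProp n m t φ (x - t • vv)) 2 volume := by
          apply eLpNorm_congr_norm_ae
          filter_upwards with x
          rw [freeProp_boost m hm.ne' t vv φ x]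
          rw [norm_mul, norm_mul, norm_mul, Complex.norm_exp_ofReal_mul_I, one_mul]
      _ = eLpNorm (fun x => (a (x + t • vv) : ℂ) * freeProp n m t φ x) 2 volume := by
          have h := eLpNorm_comp_add_right'
            (fun x => (a x : ℂ) * freeProp n m t φ (x - t • vv)) (t • vv)
          simp only [add_sub_cancel_right] at h
          exact h.symm
      _ = eLpNorm (fun x => (a (x + τ • (‖vv‖⁻¹ • vv)) : ℂ) *
            (freeProp n m t φ x - φ x)) 2 volume := by
          apply eLpNorm_congr_ae
          filter_upwards [hsupp] with x hx
          rw [hs] at hx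
          rw [hs, mul_sub, hx, sub_zero]
  · refine le_trans (eLpNorm_mono_ae (g := (A : ℂ) • fun x => freeProp n m t φ x - φ x) ?_) ?_
    · filter_upwards with x
      simp only [Pi.smul_apply, smul_eq_mul, norm_mul]
      have h1 : ‖((a (x + τ • (‖vv‖⁻¹ • vv)) : ℝ) : ℂ)‖ ≤ ‖((A : ℝ) : ℂ)‖ := by
        rw [Complex.norm_real, Complex.norm_real, Real.norm_eq_abs, Real.norm_eq_abs]
        exact (ha_bdd _).trans (le_abs_self A)
      exact mul_le_mul_of_nonneg_right h1 (norm_nonneg _)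
    · rw [eLpNorm_const_smul]
      apply le_of_eq
      congr 1
      rw [← ofReal_norm, Complex.norm_real, Real.norm_of_nonneg hA]
end
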